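/- Let P and Q be probability measures on a measurable space and let E be a measurable set. Then P(E) + Q(Eᶜ) ≥ (1/2) * exp(-KL(P ‖ Q)), where KL(P ‖ Q) denotes the Kullback–Leibler divergence of P with respect to Q (with the convention that the right-hand side is 0 when KL(P ‖ Q) = ∞). -/

import Mathlib

open MeasureTheory
open scoped Classical

/-- The Kullback–Leibler divergence of `P` with respect to `Q`, valued in `ℝ≥0∞`:
it equals `∫ log (dP/dQ) dP` when `P ≪ Q` (and this integral is well defined),
and `∞` otherwise. -/
noncomputable def klDiv {Ω : Type*} [MeasurableSpace Ω] (P Q : Measure Ω) : ENNReal :=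
  if P ≪ Q ∧ Integrable (llr P Q) P then ENNReal.ofReal (∫ x, llr P Q x ∂P) else ⊤

/-- The Bretagnolle–Huber inequality:
`P(E) + Q(Eᶜ) ≥ (1/2) * exp (- KL(P‖Q))`, with the convention that the right-hand
side is `0` when `KL(P‖Q) = ∞`. -/
theorem bretagnolle_huber {Ω : Type*} [MeasurableSpace Ω] (P Q : Measure Ω)
    [IsProbabilityMeasure P] [IsProbabilityMeasure Q] (E : Set Ω) (hE : MeasurableSet E) :
    (if klDiv P Q = ⊤ then (0 : ℝ) else (1 / 2) * Real.exp (-(klDiv P Q).toReal))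
      ≤ (P E).toReal + (Q Eᶜ).toReal := by
  split_ifs with htop
  · positivity
  -- extract hypotheses
  have hcond : P ≪ Q ∧ Integrable (llr P Q) P := by
    by_contra h
    exact htop (by simp [klDiv, h])
  obtain ⟨hPQ, hint⟩ := hcond
  set K : ℝ := ∫ x, llr P Q x ∂P with hK
  have hkl : klDiv P Q = ENNReal.ofReal K := by simp [klDiv, hPQ, hint, hK]
  set f : Ω → ENNReal := P.rnDeriv Q with hf
  have hfm : Measurable f := Measure.measurable_rnDeriv P Q
  have hPd : Q.withDensity f = P := Measure.withDensity_rnDeriv_eq P Q hPQ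
  -- a.e. facts
  have hpos : ∀ᵐ x ∂P, 0 < f x := Measure.rnDeriv_pos hPQ
  have hlt : ∀ᵐ x ∂P, f x < ⊤ := hPQ.ae_le (Measure.rnDeriv_lt_top P Q)
  -- Step 1 (Jensen): ofReal (exp (-K/2)) ≤ ∫⁻ ofReal (exp (-llr/2)) dP
  set m : ℝ := Real.exp (-K / 2) with hm
  set h : Ω → ℝ := fun x => m * (1 + K/2) - (m/2) * llr P Q x with hh
  have hhint : Integrable h P := (integrable_const _).sub (hint.const_mul _)
  have hintegral_h : ∫ x, h x ∂P = m := by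
    rw [hh]
    rw [integral_sub (integrable_const _) (hint.const_mul _), integral_const,
      integral_const_mul]
    simp [← hK]
    ring
  have hptwise : ∀ x, h x ≤ Real.exp (-llr P Q x / 2) := by
    intro x
    have hexp := Real.add_one_le_exp ((-llr P Q x / 2) - (-K / 2))
    calc h x = m * (((-llr P Q x / 2) - (-K / 2)) + 1) := by rw [hh]; ring
      _ ≤ m * Real.exp ((-llr P Q x / 2) - (-K / 2)) := by
          apply mul_le_mul_of_nonneg_left _ (Real.exp_nonneg _)
          linarith
      _ = Real.exp (-llr P Q x / 2) := by
          rw [hm, ← Real.exp_add]; ring_nf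
  have step1 : ENNReal.ofReal m ≤ ∫⁻ x, ENNReal.ofReal (Real.exp (-llr P Q x / 2)) ∂P := by
    have hmax : Integrable (fun x => max (h x) 0) P := hhint.pos_part
    have h1 : ENNReal.ofReal m ≤ ENNReal.ofReal (∫ x, max (h x) 0 ∂P) := by
      apply ENNReal.ofReal_le_ofReal
      rw [← hintegral_h]
      exact integral_mono hhint hmax (fun x => le_max_left _ _)
    refine h1.trans ?_
    rw [ofReal_integral_eq_lintegral_ofReal hmax
      (Filter.Eventually.of_forall fun x => le_max_right _ _)]
    refine lintegral_mono fun x => ENNReal.ofReal_le_ofReal ?_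
    exact max_le (hptwise x) (Real.exp_nonneg _)
  -- Step 2: ∫⁻ ofReal (exp (-llr/2)) dP = ∫⁻ f^(-1/2 : ℝ) dP
  have step2 : ∫⁻ x, ENNReal.ofReal (Real.exp (-llr P Q x / 2)) ∂P
      = ∫⁻ x, f x ^ (-(1/2) : ℝ) ∂P := by
    refine lintegral_congr_ae ?_
    filter_upwards [hpos, hlt] with x hx0 hxt
    have hx0' : 0 < (f x).toReal := ENNReal.toReal_pos hx0.ne' hxt.ne
    have : Real.exp (-llr P Q x / 2) = (f x).toReal ^ (-(1/2) : ℝ) := by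
      rw [Real.rpow_def_of_pos hx0']
      unfold llr
      congr 1
      ring
    rw [this, ← ENNReal.ofReal_rpow_of_pos hx0']
    rw [ENNReal.ofReal_toReal hxt.ne]
  -- Step 3: ∫⁻ f^(-1/2) dP ≤ ∫⁻ f^(1/2) dQ
  have step3 : ∫⁻ x, f x ^ (-(1/2) : ℝ) ∂P ≤ ∫⁻ x, f x ^ ((1:ℝ)/2) ∂Q := by
    conv_lhs => rw [← hPd]
    rw [lintegral_withDensity_eq_lintegral_mul _ hfm (hfm.pow_const _)]
    refine lintegral_mono fun x => ?_
    simp only [Pi.mul_apply]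
    rcases eq_or_ne (f x) 0 with h0 | h0
    · simp [h0, ENNReal.zero_rpow_of_neg, ENNReal.zero_rpow_of_pos]
    rcases eq_or_ne (f x) ⊤ with ht | ht
    · simp [ht]
    · have heq : f x ^ (-(1/2) : ℝ) * f x = f x ^ ((-(1/2) : ℝ) + 1) := by
        rw [ENNReal.rpow_add _ _ h0 ht, ENNReal.rpow_one]
      rw [mul_comm, heq]
      norm_num
  -- Step 4 (Cauchy-Schwarz): (∫⁻ f^(1/2) dQ)^2 ≤ (∫⁻ min(f,1) dQ) * (∫⁻ max(f,1) dQ)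
  set M : ENNReal := ∫⁻ x, min (f x) 1 ∂Q with hM
  set N : ENNReal := ∫⁻ x, max (f x) 1 ∂Q with hN
  have step4 : (∫⁻ x, f x ^ ((1:ℝ)/2) ∂Q) ≤ M ^ ((1:ℝ)/2) * N ^ ((1:ℝ)/2) := by
    have hconj : Real.HolderConjugate 2 2 := Real.HolderConjugate.two_two
    have hcs := ENNReal.lintegral_mul_le_Lp_mul_Lq Q hconj
      (f := fun x => min (f x) 1 ^ ((1:ℝ)/2)) (g := fun x => max (f x) 1 ^ ((1:ℝ)/2))
      ((hfm.min measurable_const).pow_const ((1:ℝ)/2)).aemeasurable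
      ((hfm.max measurable_const).pow_const ((1:ℝ)/2)).aemeasurable
    have heq1 : ∀ x, (fun x => min (f x) 1 ^ ((1:ℝ)/2)) x * (fun x => max (f x) 1 ^ ((1:ℝ)/2)) x
        = f x ^ ((1:ℝ)/2) := by
      intro x
      rw [← ENNReal.mul_rpow_of_nonneg _ _ (by norm_num : (0:ℝ) ≤ 1/2)]
      rw [min_mul_max]
      rw [mul_one]
    have heq2 : ∀ (g : Ω → ENNReal) x, (g x ^ ((1:ℝ)/2)) ^ (2:ℝ) = g x := by
      intro g x
      rw [← ENNReal.rpow_mul]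
      norm_num
    calc ∫⁻ x, f x ^ ((1:ℝ)/2) ∂Q
        = ∫⁻ x, ((fun x => min (f x) 1 ^ ((1:ℝ)/2)) * (fun x => max (f x) 1 ^ ((1:ℝ)/2))) x ∂Q := by
          refine lintegral_congr fun x => ?_
          simp only [Pi.mul_apply]
          rw [heq1 x]
      _ ≤ (∫⁻ x, (min (f x) 1 ^ ((1:ℝ)/2)) ^ (2:ℝ) ∂Q) ^ ((1:ℝ)/2)
          * (∫⁻ x, (max (f x) 1 ^ ((1:ℝ)/2)) ^ (2:ℝ) ∂Q) ^ ((1:ℝ)/2) := hcs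
      _ = M ^ ((1:ℝ)/2) * N ^ ((1:ℝ)/2) := by
          rw [hM, hN]
          congr 1
          · congr 1; exact lintegral_congr fun x => heq2 (fun x => min (f x) 1) x
          · congr 1; exact lintegral_congr fun x => heq2 (fun x => max (f x) 1) x
  -- Step 5 : N ≤ 2
  have step5 : N ≤ 2 := by
    have : N ≤ ∫⁻ x, (f x + 1) ∂Q := lintegral_mono fun x => max_le le_self_add le_add_self
    refine this.trans ?_
    rw [lintegral_add_right _ measurable_const, lintegral_one]
    have : ∫⁻ x, f x ∂Q = P Set.univ := by
      rw [← hPd]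
      rw [← setLIntegral_univ, ← withDensity_apply _ MeasurableSet.univ]
    rw [this]
    simp [measure_univ]
    norm_num
  -- Step 6 : M ≤ P E + Q Eᶜ
  have step6 : M ≤ P E + Q Eᶜ := by
    rw [hM, ← lintegral_add_compl _ hE]
    refine add_le_add ?_ ?_
    · have : ∫⁻ x in E, min (f x) 1 ∂Q ≤ ∫⁻ x in E, f x ∂Q :=
        lintegral_mono fun x => min_le_left _ _
      refine this.trans ?_
      rw [← withDensity_apply _ hE, hPd]
    · have : ∫⁻ x in Eᶜ, min (f x) 1 ∂Q ≤ ∫⁻ x in Eᶜ, 1 ∂Q :=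
        lintegral_mono fun x => min_le_right _ _
      refine this.trans ?_
      rw [setLIntegral_one]
  -- Combine: ofReal (exp (-K)) ≤ 2 * (P E + Q Eᶜ)
  have hcomb : ENNReal.ofReal (Real.exp (-K)) ≤ 2 * (P E + Q Eᶜ) := by
    have hA : ENNReal.ofReal m ≤ M ^ ((1:ℝ)/2) * N ^ ((1:ℝ)/2) :=
      step1.trans <| step2.le.trans <| step3.trans step4
    have hsq : (ENNReal.ofReal m) ^ (2:ℝ) ≤ (M ^ ((1:ℝ)/2) * N ^ ((1:ℝ)/2)) ^ (2:ℝ) :=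
      ENNReal.rpow_le_rpow hA (by norm_num)
    have hexp : (ENNReal.ofReal m) ^ (2:ℝ) = ENNReal.ofReal (Real.exp (-K)) := by
      have hm2 : (0:ℝ) < m := by rw [hm]; exact Real.exp_pos _
      rw [ENNReal.ofReal_rpow_of_pos hm2]
      exact congrArg ENNReal.ofReal (by rw [hm, ← Real.exp_mul]; ring_nf)
    have hrhs : (M ^ ((1:ℝ)/2) * N ^ ((1:ℝ)/2)) ^ (2:ℝ) = M * N := by
      rw [ENNReal.mul_rpow_of_nonneg _ _ (by norm_num : (0:ℝ) ≤ 2),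
        ← ENNReal.rpow_mul, ← ENNReal.rpow_mul]
      norm_num
    rw [hexp, hrhs] at hsq
    refine hsq.trans ?_
    calc M * N ≤ M * 2 := mul_le_mul_right step5 M
      _ = 2 * M := mul_comm _ _
      _ ≤ 2 * (P E + Q Eᶜ) := mul_le_mul_right step6 2
  -- Finish: convert to real
  have hfin : (P E + Q Eᶜ) ≠ ⊤ := by
    finiteness
  have hreal : Real.exp (-K) ≤ 2 * ((P E).toReal + (Q Eᶜ).toReal) := by
    have := ENNReal.toReal_mono (by finiteness) hcomb
    rw [ENNReal.toReal_ofReal (Real.exp_nonneg _)] at this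
    rw [ENNReal.toReal_mul, ENNReal.toReal_add (measure_ne_top _ _) (measure_ne_top _ _)] at this
    simpa using this
  have hKle : Real.exp (-(klDiv P Q).toReal) ≤ Real.exp (-K) := by
    apply Real.exp_le_exp.mpr
    rw [hkl, ENNReal.toReal_ofReal']
    exact neg_le_neg (le_max_left K 0)
  linarith
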